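/- Let U and V be Hilbert C*-modules over a unital C*-algebra A and T : U → V an A-linear map. Then T is bounded if and only if there exists k > 0 such that ⟨Tf, Tf⟩ ≤ k⟨f, f⟩ in the positive cone of A, for all f ∈ U. -/

import Mathlib

open MeasureTheory CStarModule
open scoped RightActions

/-- The Hilbert C*-module class of Mathlib (December 2024): a right `A`-action, with the inner
product `A`-linear in the second argument. Mathlib's `CStarModule` now uses a left action. -/
class CStarModuleRight (A : outParam <| Type*) (E : Type*) [NonUnitalSemiring A] [StarRing A]
    [Module ℂ A] [AddCommGroup E] [Module ℂ E] [PartialOrder A] [SMul Aᵐᵒᵖ E] [Norm A] [Norm E]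
    extends Inner A E where
  inner_add_right {x} {y} {z} : inner x (y + z) = inner x y + inner x z
  inner_self_nonneg {x} : 0 ≤ inner x x
  inner_self {x} : inner x x = 0 ↔ x = 0
  inner_op_smul_right {a : A} {x y : E} : inner x (y <• a) = inner x y * a
  inner_smul_right_complex {z : ℂ} {x} {y} : inner x (z • y) = z • inner x y
  star_inner x y : star (inner x y) = inner y x
  norm_eq_sqrt_norm_inner_self x : ‖x‖ = Real.sqrt ‖inner x x‖

variable {A : Type*} [CStarAlgebra A] [PartialOrder A] [StarOrderedRing A]
variable {U : Type*} [NormedAddCommGroup U] [NormedSpace ℂ U] [CompleteSpace U]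
  [SMul Aᵐᵒᵖ U] [CStarModuleRight A U]
variable {Ω : Type*} [MeasurableSpace Ω]

local notation "⟪" x ", " y "⟫" => (inner A x y : A)

/-- `F : Ω → U` is a continuous frame for the Hilbert C*-module `U` with bounds `A₀`, `B`. -/
def IsContinuousFrame (μ : Measure Ω) (F : Ω → U) (A₀ B : ℝ) : Prop :=
  0 < A₀ ∧ 0 < B ∧
  (∀ f : U, StronglyMeasurable fun ω => (inner A f (F ω) : A)) ∧
  (∀ f : U, Integrable (fun ω => (inner A f (F ω) : A) * inner A (F ω) f) μ) ∧
  ∀ f : U, A₀ • (inner A f f : A) ≤ (∫ ω, (inner A f (F ω) : A) * inner A (F ω) f ∂μ) ∧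
    (∫ ω, (inner A f (F ω) : A) * inner A (F ω) f ∂μ) ≤ B • (inner A f f : A)

/-- `F : Ω → U` is a continuous Bessel mapping with bound `B`. -/
def IsBessel (μ : Measure Ω) (F : Ω → U) (B : ℝ) : Prop :=
  0 < B ∧
  (∀ f : U, StronglyMeasurable fun ω => (inner A f (F ω) : A)) ∧
  (∀ f : U, Integrable (fun ω => (inner A f (F ω) : A) * inner A (F ω) f) μ) ∧
  ∀ f : U, (∫ ω, (inner A f (F ω) : A) * inner A (F ω) f ∂μ) ≤ B • (inner A f f : A)

/-- `φ : Ω → A` belongs to the Hilbert `A`-module `L²(Ω, A)`. -/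
def MemL2 (μ : Measure Ω) (φ : Ω → A) : Prop :=
  AEStronglyMeasurable φ μ ∧ Integrable (fun ω => star (φ ω) * φ ω) μ

/-- `G` is a dual of the continuous Bessel mapping `F` (weak reconstruction formula). -/
def IsDual (μ : Measure Ω) (F G : Ω → U) : Prop :=
  (∃ B : ℝ, IsBessel μ G B) ∧
  ∀ f g : U, (inner A f g : A) = ∫ ω, (inner A f (G ω) : A) * inner A (F ω) g ∂μ

namespace CStarModuleRight

theorem inner_sub_right {W : Type*} [NormedAddCommGroup W] [NormedSpace ℂ W]
    [SMul Aᵐᵒᵖ W] [CStarModuleRight A W] {x y z : W} :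
    inner A x (y - z) = inner A x y - inner A x z := by
  rw [eq_sub_iff_add_eq, ← CStarModuleRight.inner_add_right, sub_add_cancel]

theorem inner_op_smul_left {W : Type*} [NormedAddCommGroup W] [NormedSpace ℂ W]
    [SMul Aᵐᵒᵖ W] [CStarModuleRight A W] {a : A} {x y : W} :
    inner A (x <• a) y = star a * inner A x y := by
  rw [← CStarModuleRight.star_inner y (x <• a), CStarModuleRight.inner_op_smul_right, star_mul,
    CStarModuleRight.star_inner]

theorem norm_sq_eq {W : Type*} [NormedAddCommGroup W] [NormedSpace ℂ W]
    [SMul Aᵐᵒᵖ W] [CStarModuleRight A W] {x : W} :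
    ‖x‖ ^ 2 = ‖(inner A x x : A)‖ := by
  rw [CStarModuleRight.norm_eq_sqrt_norm_inner_self x, Real.sq_sqrt (norm_nonneg _)]

end CStarModuleRight

private lemma my_ext_inner {W : Type*} [NormedAddCommGroup W] [NormedSpace ℂ W]
    [SMul Aᵐᵒᵖ W] [CStarModuleRight A W] {u v : W}
    (h : ∀ x : W, (inner A x u : A) = inner A x v) : u = v := by
  have h2 : (inner A (u - v) (u - v) : A) = 0 := by
    rw [CStarModuleRight.inner_sub_right, h (u - v), sub_self]
  exact sub_eq_zero.mp (CStarModuleRight.inner_self.mp h2)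

/-- An `A`-linear map between Hilbert C*-modules is bounded iff
`⟨Tf, Tf⟩ ≤ k ⟨f, f⟩` for some `k > 0`. -/
theorem bounded_iff_inner_le
    {V : Type*} [NormedAddCommGroup V] [NormedSpace ℂ V] [CompleteSpace V]
    [SMul Aᵐᵒᵖ V] [CStarModuleRight A V]
    (T : U → V)
    (hadd : ∀ f g : U, T (f + g) = T f + T g)
    (hsmul : ∀ (a : A) (f : U), T (f <• a) = T f <• a) :
    (∃ C : ℝ, ∀ f : U, ‖T f‖ ≤ C * ‖f‖) ↔
      ∃ k > (0 : ℝ), ∀ f : U, (inner A (T f) (T f) : A) ≤ k • (inner A f f : A) := by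
  constructor
  · rintro ⟨C, hC⟩
    set C' : ℝ := max C 1 with hC'def
    have hC'1 : (1:ℝ) ≤ C' := le_max_right _ _
    have hC'0 : (0:ℝ) < C' := lt_of_lt_of_le one_pos hC'1
    refine ⟨C' ^ 2, by positivity, fun f => ?_⟩
    have key : ∀ ε : ℝ, 0 < ε →
        (inner A (T f) (T f) : A) ≤ C' ^ 2 • (inner A f f : A) + (C' ^ 2 * ε) • 1 := by
      intro ε hε
      set p : A := inner A f f with hp_def
      have hp : (0:A) ≤ p := CStarModuleRight.inner_self_nonneg
      set h : A := p + algebraMap ℝ A ε with hh_def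
      have hεA : (0:A) ≤ algebraMap ℝ A ε := by
        rw [Algebra.algebraMap_eq_smul_one]
        exact smul_nonneg hε.le zero_le_one
      have hh : (0:A) ≤ h := add_nonneg hp hεA
      have hle : algebraMap ℝ A ε ≤ h := le_add_of_nonneg_left hp
      have huε : IsUnit (algebraMap ℝ A ε) :=
        (isUnit_iff_ne_zero.mpr hε.ne').map (algebraMap ℝ A)
      have hu : IsUnit h := CStarAlgebra.isUnit_of_le _ hle (huε.isStrictlyPositive hεA)
      have hsp : (0:NNReal) ∉ spectrum NNReal h := (spectrum.zero_notMem_iff NNReal).mpr hu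
      set b : A := h ^ (-(1/2) : ℝ) with hb_def
      set a : A := h ^ ((1/2) : ℝ) with ha_def
      have hb : (0:A) ≤ b := CFC.rpow_nonneg
      have ha : (0:A) ≤ a := CFC.rpow_nonneg
      have hsb : star b = b := IsSelfAdjoint.of_nonneg hb
      have hsa : star a = a := IsSelfAdjoint.of_nonneg ha
      have hba : b * a = 1 := by
        rw [hb_def, ha_def, ← CFC.rpow_add hu]
        have h0 : (-(1/2 : ℝ) + 1/2) = 0 := by norm_num
        rw [h0, CFC.rpow_zero h hh]
      have haa : a * a = h := by
        rw [ha_def, ← CFC.rpow_add hu]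
        have h0 : ((1/2 : ℝ) + 1/2) = 1 := by norm_num
        rw [h0, CFC.rpow_one h hh]
      have hbhb : b * h * b = 1 := CFC.conjugate_rpow_neg_one_half h (hu.isStrictlyPositive hh)
      set g : U := f <• b with hg_def
      have hgf : g <• a = f := my_ext_inner fun x => by
        rw [hg_def]
        simp only [CStarModuleRight.inner_op_smul_right]
        rw [mul_assoc, hba, mul_one]
      have hgg : (inner A g g : A) = b * p * b := by
        rw [hg_def]
        simp only [CStarModuleRight.inner_op_smul_right, CStarModuleRight.inner_op_smul_left, hsb, mul_assoc, ← hp_def]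
      have hgg_le : (inner A g g : A) ≤ 1 := by
        rw [hgg]
        calc b * p * b = star b * p * b := by rw [hsb]
          _ ≤ star b * h * b := star_left_conjugate_le_conjugate (le_add_of_nonneg_right hεA) b
          _ = 1 := by rw [hsb]; exact hbhb
      have hgnorm : ‖g‖ ≤ 1 := by
        have h1 : ‖(inner A g g : A)‖ ≤ 1 :=
          (CStarAlgebra.norm_le_one_iff_of_nonneg _ CStarModuleRight.inner_self_nonneg).mpr hgg_le
        rw [CStarModuleRight.norm_eq_sqrt_norm_inner_self]
        calc √‖(inner A g g : A)‖ ≤ √1 := Real.sqrt_le_sqrt h1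
          _ = 1 := Real.sqrt_one
      have hTg : ‖T g‖ ≤ C' := by
        calc ‖T g‖ ≤ C * ‖g‖ := hC g
          _ ≤ C' * 1 := mul_le_mul (le_max_left _ _) hgnorm (norm_nonneg g) hC'0.le
          _ = C' := mul_one _
      have hTgA : (inner A (T g) (T g) : A) ≤ algebraMap ℝ A (C' ^ 2) := by
        rw [← CStarAlgebra.norm_le_iff_le_algebraMap _ (by positivity)
          CStarModuleRight.inner_self_nonneg, ← CStarModuleRight.norm_sq_eq]
        exact pow_le_pow_left₀ (norm_nonneg _) hTg 2
      calc (inner A (T f) (T f) : A) = inner A (T g <• a) (T g <• a) := by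
            rw [← hgf, hsmul]
        _ = star a * (inner A (T g) (T g) : A) * a := by
            simp only [CStarModuleRight.inner_op_smul_right, CStarModuleRight.inner_op_smul_left, mul_assoc]
        _ ≤ star a * algebraMap ℝ A (C' ^ 2) * a := star_left_conjugate_le_conjugate hTgA a
        _ = C' ^ 2 • (a * a) := by
            rw [hsa, Algebra.algebraMap_eq_smul_one, mul_smul_comm, mul_one, smul_mul_assoc]
        _ = C' ^ 2 • h := by rw [haa]
        _ = C' ^ 2 • p + (C' ^ 2 * ε) • 1 := by
            rw [hh_def, smul_add, Algebra.algebraMap_eq_smul_one, smul_smul]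
    have tend : Filter.Tendsto (fun ε : ℝ => C' ^ 2 • (inner A f f : A) + (C' ^ 2 * ε) • 1)
        (nhdsWithin 0 (Set.Ioi 0)) (nhds (C' ^ 2 • (inner A f f : A))) := by
      have hcont : Filter.Tendsto (fun ε : ℝ => C' ^ 2 • (inner A f f : A) + (C' ^ 2 * ε) • 1)
          (nhds 0) (nhds (C' ^ 2 • (inner A f f : A) + (C' ^ 2 * 0) • 1)) := by
        apply Filter.Tendsto.add tendsto_const_nhds
        exact ((continuous_const.mul continuous_id).smul continuous_const).tendsto 0
      simpa using hcont.mono_left nhdsWithin_le_nhds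
    refine ge_of_tendsto tend ?_
    filter_upwards [self_mem_nhdsWithin] with ε (hε : ε ∈ Set.Ioi 0)
    exact key ε hε
  · rintro ⟨k, hk, hkf⟩
    refine ⟨Real.sqrt k, fun f => ?_⟩
    have h1 : ‖(inner A (T f) (T f) : A)‖ ≤ ‖k • (inner A f f : A)‖ :=
      CStarAlgebra.norm_le_norm_of_nonneg_of_le CStarModuleRight.inner_self_nonneg (hkf f)
    have h2 : ‖k • (inner A f f : A)‖ = k * ‖f‖ ^ 2 := by
      rw [norm_smul, Real.norm_eq_abs, abs_of_pos hk, ← CStarModuleRight.norm_sq_eq]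
    rw [CStarModuleRight.norm_eq_sqrt_norm_inner_self (x := T f)]
    calc √‖(inner A (T f) (T f) : A)‖ ≤ √(k * ‖f‖ ^ 2) := Real.sqrt_le_sqrt (h2 ▸ h1)
      _ = √k * ‖f‖ := by
          rw [Real.sqrt_mul hk.le, Real.sqrt_sq (norm_nonneg f)]
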